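/- Let m = 2t be an even integer with t ≥ 2. Define the m polynomials over ℂ: h_{2l+1}(z) = z^l + z^{2t−l−1} and h_{2l+2}(z) = √(−1)·(z^l − z^{2t−l−1}) for 0 ≤ l ≤ t−2, together with h_{2t−1}(z) = √(−(t−1))·(z^{t−1} + z^t) and h_{2t}(z) = √(t−1)·(z^{t−1} − z^t). Then h_1, …, h_m are linearly independent over ℂ (hence form a basis of the space of polynomials of degree at most m−1), and moreover ∑_{k=1}^{m} h_k(z)^2 = 0 identically. -/

import Mathlib

open Polynomial

/-- The `m = 2t` Enneper–Weierstrass polynomials of the appendix, indexed by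
`k : Fin (2*t)` (0-based; the paper's 1-based index is `k.val + 1`):
`h_{2l+1} = z^l + z^{2t−l−1}` and `h_{2l+2} = i (z^l − z^{2t−l−1})` for
`0 ≤ l ≤ t−2`, together with `h_{2t−1} = i√(t−1)·(z^{t−1} + z^t)` and
`h_{2t} = √(t−1)·(z^{t−1} − z^t)`. -/
noncomputable def weierstrassPoly (t : ℕ) (k : Fin (2 * t)) : Polynomial ℂ :=
  let l := k.val / 2
  if l + 1 < t then
    if k.val % 2 = 0 then X ^ l + X ^ (2 * t - l - 1)
    else C Complex.I * (X ^ l - X ^ (2 * t - l - 1))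
  else
    if k.val % 2 = 0 then
      C (Complex.I * (Real.sqrt ((t : ℝ) - 1) : ℂ)) * (X ^ (t - 1) + X ^ t)
    else
      C ((Real.sqrt ((t : ℝ) - 1) : ℂ)) * (X ^ (t - 1) - X ^ t)


lemma wp_even {t l : ℕ} (hl : l + 1 < t) (h2 : 2*l < 2*t) :
    weierstrassPoly t ⟨2*l, h2⟩ = X ^ l + X ^ (2*t - l - 1) := by
  have d : 2*l/2 = l := by omega
  have m : 2*l % 2 = 0 := by omega
  simp [weierstrassPoly, d, m, hl]

lemma wp_odd {t l : ℕ} (hl : l + 1 < t) (h2 : 2*l+1 < 2*t) :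
    weierstrassPoly t ⟨2*l+1, h2⟩ = C Complex.I * (X ^ l - X ^ (2*t - l - 1)) := by
  have d : (2*l+1)/2 = l := by omega
  have m : (2*l+1) % 2 = 1 := by omega
  simp [weierstrassPoly, d, m, hl]

lemma wp_last_even {t : ℕ} (ht : 2 ≤ t) (h2 : 2*t-2 < 2*t) :
    weierstrassPoly t ⟨2*t-2, h2⟩
      = C (Complex.I * (Real.sqrt ((t : ℝ) - 1) : ℂ)) * (X ^ (t - 1) + X ^ t) := by
  have d : (2*t-2)/2 = t-1 := by omega
  have m : (2*t-2) % 2 = 0 := by omega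
  have hl : ¬ (t - 1 + 1 < t) := by omega
  simp [weierstrassPoly, d, m, hl]

lemma wp_last_odd {t : ℕ} (ht : 2 ≤ t) (h2 : 2*t-1 < 2*t) :
    weierstrassPoly t ⟨2*t-1, h2⟩
      = C ((Real.sqrt ((t : ℝ) - 1) : ℂ)) * (X ^ (t - 1) - X ^ t) := by
  have d : (2*t-1)/2 = t-1 := by omega
  have m : (2*t-1) % 2 = 1 := by omega
  have hl : ¬ (t - 1 + 1 < t) := by omega
  simp [weierstrassPoly, d, m, hl]

lemma Xpow_mem_degreeLT {n a : ℕ} (h : a < n) : (X:ℂ[X])^a ∈ degreeLT ℂ n :=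
  Polynomial.mem_degreeLT.2 (by rw [degree_X_pow]; exact_mod_cast h)

lemma wp_mem_degreeLT (t : ℕ) (j : Fin (2*t)) :
    weierstrassPoly t j ∈ degreeLT ℂ (2*t) := by
  have hj := j.2
  unfold weierstrassPoly
  simp only []
  split_ifs with h1 h2 h3 <;>
    [skip; rw [← smul_eq_C_mul]; rw [← smul_eq_C_mul]; rw [← smul_eq_C_mul]]
  · exact Submodule.add_mem _ (Xpow_mem_degreeLT (by omega)) (Xpow_mem_degreeLT (by omega))
  · exact Submodule.smul_mem _ _
      (Submodule.sub_mem _ (Xpow_mem_degreeLT (by omega)) (Xpow_mem_degreeLT (by omega)))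
  · exact Submodule.smul_mem _ _
      (Submodule.add_mem _ (Xpow_mem_degreeLT (by omega)) (Xpow_mem_degreeLT (by omega)))
  · exact Submodule.smul_mem _ _
      (Submodule.sub_mem _ (Xpow_mem_degreeLT (by omega)) (Xpow_mem_degreeLT (by omega)))

lemma Xpow_mem_span {t a : ℕ} (ht : 2 ≤ t) (ha : a < 2*t) :
    (X:ℂ[X])^a ∈ Submodule.span ℂ (Set.range (weierstrassPoly t)) := by
  have mem2 : ∀ (j1 j2 : Fin (2*t)) (c1 c2 : ℂ),
      (X:ℂ[X])^a = c1 • weierstrassPoly t j1 + c2 • weierstrassPoly t j2 →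
      (X:ℂ[X])^a ∈ Submodule.span ℂ (Set.range (weierstrassPoly t)) := by
    intro j1 j2 c1 c2 h
    rw [h]
    exact Submodule.add_mem _ (Submodule.smul_mem _ _ (Submodule.subset_span ⟨j1, rfl⟩))
      (Submodule.smul_mem _ _ (Submodule.subset_span ⟨j2, rfl⟩))
  set c : ℂ := (Real.sqrt ((t : ℝ) - 1) : ℂ) with hc_def
  have hc : c ≠ 0 := by
    have h2r : (2:ℝ) ≤ (t:ℝ) := by exact_mod_cast ht
    simp only [hc_def, Complex.ofReal_ne_zero]
    exact ne_of_gt (Real.sqrt_pos.2 (by linarith))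
  rcases lt_trichotomy (a+1) t with h1 | h1 | h1
  · apply mem2 ⟨2*a, by omega⟩ ⟨2*a+1, by omega⟩ (1/2) (-(Complex.I)/2)
    rw [wp_even h1, wp_odd h1, ← smul_eq_C_mul]
    match_scalars <;> ring_nf <;> simp [Complex.I_sq] <;> norm_num
  · -- a = t - 1
    have hat : a = t - 1 := by omega
    apply mem2 ⟨2*t-2, by omega⟩ ⟨2*t-1, by omega⟩ (-Complex.I/(2*c)) (1/(2*c))
    rw [wp_last_even ht, wp_last_odd ht, ← smul_eq_C_mul, ← smul_eq_C_mul, hat]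
    match_scalars <;> field_simp <;> linear_combination c * Complex.I_sq
  · rcases eq_or_lt_of_le (show t ≤ a by omega) with h2 | h2
    · -- a = t
      apply mem2 ⟨2*t-2, by omega⟩ ⟨2*t-1, by omega⟩ (-Complex.I/(2*c)) (-(1/(2*c)))
      rw [wp_last_even ht, wp_last_odd ht, ← smul_eq_C_mul, ← smul_eq_C_mul, ← h2]
      match_scalars <;> field_simp <;> linear_combination c * Complex.I_sq
    · -- t < a, use l = 2t-1-a
      set l : ℕ := 2*t-1-a with hl_def
      have hl : l + 1 < t := by omega
      have hb : 2*t - l - 1 = a := by omega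
      apply mem2 ⟨2*l, by omega⟩ ⟨2*l+1, by omega⟩ (1/2) ((Complex.I)/2)
      rw [wp_even hl, wp_odd hl, ← smul_eq_C_mul, hb]
      match_scalars <;> ring_nf <;> simp [Complex.I_sq] <;> norm_num

lemma wp_span_eq {t : ℕ} (ht : 2 ≤ t) :
    Submodule.span ℂ (Set.range (weierstrassPoly t)) = degreeLT ℂ (2*t) := by
  classical
  apply le_antisymm
  · rw [Submodule.span_le]
    rintro _ ⟨j, rfl⟩
    exact wp_mem_degreeLT t j
  · rw [degreeLT_eq_span_X_pow, Submodule.span_le]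
    intro p hp
    simp only [Finset.coe_image, Finset.coe_range, Set.mem_image, Set.mem_Iio] at hp
    obtain ⟨n, hn, rfl⟩ := hp
    exact Xpow_mem_span ht hn

lemma wp_linearIndependent {t : ℕ} (ht : 2 ≤ t) :
    LinearIndependent ℂ (weierstrassPoly t) := by
  rw [linearIndependent_iff_card_eq_finrank_span]
  rw [Set.finrank, wp_span_eq ht, Fintype.card_fin]
  rw [(degreeLTEquiv ℂ (2*t)).finrank_eq]
  simp

lemma wp_pair_sum {t : ℕ} (ht : 2 ≤ t) (l : ℕ) (h2 : 2*l+1 < 2*t) (h1 : 2*l < 2*t) :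
    (weierstrassPoly t ⟨2*l, h1⟩)^2 + (weierstrassPoly t ⟨2*l+1, h2⟩)^2
      = (if l + 1 < t then (4:ℂ[X]) * X^(2*t-1)
         else C (-(4*((t:ℂ)-1))) * X^(2*t-1)) := by
  by_cases h : l + 1 < t
  · rw [wp_even h, wp_odd h, if_pos h]
    have hI : (C Complex.I : ℂ[X])^2 = -1 := by
      rw [← map_pow, Complex.I_sq, map_neg, map_one]
    have hx : (X:ℂ[X])^(2*t-1) = X^l * X^(2*t-l-1) := by
      rw [← pow_add]; congr 1; omega
    rw [mul_pow, hx, hI]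
    ring
  · have hl : l = t - 1 := by omega
    have e1 : (⟨2*l, h1⟩ : Fin (2*t)) = ⟨2*t-2, by omega⟩ := by
      apply Fin.ext; simp; omega
    have e2 : (⟨2*l+1, h2⟩ : Fin (2*t)) = ⟨2*t-1, by omega⟩ := by
      apply Fin.ext; simp; omega
    rw [if_neg h, e1, e2, wp_last_even ht, wp_last_odd ht]
    have h0 : (0:ℝ) ≤ (t:ℝ) - 1 := by
      have : (2:ℝ) ≤ (t:ℝ) := by exact_mod_cast ht
      linarith
    have hc2 : (C ((Real.sqrt ((t : ℝ) - 1) : ℂ)) : ℂ[X])^2 = C ((t:ℂ)-1) := by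
      rw [← map_pow]
      congr 1
      rw [← Complex.ofReal_pow, Real.sq_sqrt h0]
      push_cast; ring
    have hIc : (C (Complex.I * (Real.sqrt ((t : ℝ) - 1) : ℂ)) : ℂ[X])^2 = -C ((t:ℂ)-1) := by
      rw [← map_pow, ← map_neg]
      congr 1
      rw [mul_pow, Complex.I_sq, ← Complex.ofReal_pow, Real.sq_sqrt h0]
      push_cast; ring
    have hneg : (C (-(4*((t:ℂ)-1))) : ℂ[X]) = -(4 * C ((t:ℂ)-1)) := by
      rw [map_neg, map_mul, map_ofNat]
    have hx : (X:ℂ[X])^(2*t-1) = X^(t-1) * X^t := by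
      rw [← pow_add]; congr 1; omega
    rw [mul_pow, mul_pow, hc2, hIc, hneg, hx]
    ring

lemma wp_sum_sq {t : ℕ} (ht : 2 ≤ t) :
    ∑ k : Fin (2 * t), (weierstrassPoly t k) ^ 2 = 0 := by
  obtain ⟨s, rfl⟩ : ∃ s, t = s + 2 := ⟨t - 2, by omega⟩
  set t := s + 2 with ht_def
  let e : Fin t × Fin 2 ≃ Fin (2*t) := finProdFinEquiv.trans (finCongr (by ring))
  rw [← Equiv.sum_comp e (fun k => (weierstrassPoly t k)^2), Fintype.sum_prod_type]
  have hstep : ∀ l : Fin t,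
      ∑ j : Fin 2, (weierstrassPoly t (e (l, j)))^2
        = (if (l:ℕ) + 1 < t then (4:ℂ[X]) * X^(2*t-1)
           else C (-(4*((t:ℂ)-1))) * X^(2*t-1)) := by
    intro l
    rw [Fin.sum_univ_two]
    have hev : ∀ j : Fin 2, ((e (l, j) : Fin (2*t)) : ℕ) = (j:ℕ) + 2*(l:ℕ) := by
      intro j
      simp [e, finProdFinEquiv]
    have he0 : e (l, 0) = ⟨2*(l:ℕ), by omega⟩ := by
      apply Fin.ext; rw [hev 0]; simp
    have he1 : e (l, 1) = ⟨2*(l:ℕ)+1, by omega⟩ := by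
      apply Fin.ext; rw [hev 1]; simp; omega
    rw [he0, he1, wp_pair_sum ht (l:ℕ) (by omega) (by omega)]
  simp only [hstep]
  rw [Fin.sum_univ_castSucc]
  have hlast : ¬ ((Fin.last (s+1) : ℕ) + 1 < t) := by simp [ht_def]
  rw [if_neg hlast]
  have hcast : ∀ l : Fin (s+1), ((l.castSucc : ℕ) + 1 < t) := by
    intro l; have := l.2; simp only [Fin.coe_castSucc]; omega
  rw [Finset.sum_congr rfl (fun l _ => if_pos (hcast l)), Finset.sum_const, Finset.card_univ,
    Fintype.card_fin, nsmul_eq_mul]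
  have hC : (C (-(4*((t:ℂ)-1))) : ℂ[X]) = -(4 * ((t:ℂ[X]) - 1)) := by
    rw [map_neg, map_mul, map_ofNat, map_sub, map_one, map_natCast]
  rw [hC]
  have : ((t:ℂ[X])) = ((s:ℂ[X]) + 2) := by push_cast [ht_def]; ring
  rw [this]
  push_cast
  ring

/-- For every even integer `m = 2t` with `t ≥ 2`, the polynomials
`h_1, …, h_m` are linearly independent over `ℂ` (hence form a basis of the
space of polynomials of degree at most `m − 1`), and moreover
`∑_{k=1}^{m} h_k(z)^2 = 0` identically. -/
theorem weierstrassPoly_independent_and_isotropic (t : ℕ) (ht : 2 ≤ t) :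
    LinearIndependent ℂ (weierstrassPoly t) ∧
      ∑ k : Fin (2 * t), (weierstrassPoly t k) ^ 2 = 0 :=
  ⟨wp_linearIndependent ht, wp_sum_sq ht⟩
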